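/- For angles ψ, ψ' ∈ [0, π], there exists ι ∈ ℝ such that cos θ = cos ψ · cos ψ' − cos ι · sin ψ · sin ψ' if and only if |ψ − ψ'| ≤ θ ≤ π − |π − (ψ + ψ')|, for θ ∈ [0, π]. -/

import Mathlib

open Real

theorem euler_middle_angle_achievable
    (ψ ψ' θ : ℝ) (hψ : ψ ∈ Set.Icc 0 π) (hψ' : ψ' ∈ Set.Icc 0 π)
    (hθ : θ ∈ Set.Icc 0 π) :
    (∃ ι : ℝ, Real.cos θ = Real.cos ψ * Real.cos ψ' - Real.cos ι * Real.sin ψ * Real.sin ψ') ↔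
      (|ψ - ψ'| ≤ θ ∧ θ ≤ π - |π - (ψ + ψ')|) := by
  obtain ⟨hψ0, hψπ⟩ := hψ
  obtain ⟨hψ'0, hψ'π⟩ := hψ'
  obtain ⟨hθ0, hθπ⟩ := hθ
  have hpi := Real.pi_pos
  set a := |ψ - ψ'| with ha
  set b := π - |π - (ψ + ψ')| with hb
  have ha0 : 0 ≤ a := abs_nonneg _
  have haπ : a ≤ π := by
    rw [ha, abs_sub_le_iff]; constructor <;> linarith
  have hb0 : 0 ≤ b := by
    rw [hb, sub_nonneg, abs_le]; constructor <;> linarith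
  have hbπ : b ≤ π := by
    have := abs_nonneg (π - (ψ + ψ')); rw [hb]; linarith
  have hcosa : Real.cos a = Real.cos ψ * Real.cos ψ' + Real.sin ψ * Real.sin ψ' := by
    rw [ha, Real.cos_abs, Real.cos_sub]
  have hcosb : Real.cos b = Real.cos ψ * Real.cos ψ' - Real.sin ψ * Real.sin ψ' := by
    rw [hb]
    rw [show π - |π - (ψ + ψ')| = π - |π - (ψ + ψ')| from rfl]
    rw [Real.cos_pi_sub, Real.cos_abs, Real.cos_pi_sub, Real.cos_add]
    ring
  have hsψ : 0 ≤ Real.sin ψ := Real.sin_nonneg_of_nonneg_of_le_pi hψ0 hψπ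
  have hsψ' : 0 ≤ Real.sin ψ' := Real.sin_nonneg_of_nonneg_of_le_pi hψ'0 hψ'π
  have anti := Real.strictAntiOn_cos
  have key : ∀ x y : ℝ, 0 ≤ x → x ≤ π → 0 ≤ y → y ≤ π →
      (Real.cos x ≤ Real.cos y ↔ y ≤ x) := by
    intro x y hx0 hxπ hy0 hyπ
    constructor
    · intro h
      by_contra hlt
      push_neg at hlt
      exact absurd h (not_le.2 (anti ⟨hx0, hxπ⟩ ⟨hy0, hyπ⟩ hlt))
    · intro h
      rcases eq_or_lt_of_le h with rfl | h
      · exact le_refl _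
      · exact (anti ⟨hy0, hyπ⟩ ⟨hx0, hxπ⟩ h).le
  constructor
  · rintro ⟨ι, hι⟩
    have h1 : Real.cos ι ≤ 1 := Real.cos_le_one ι
    have h2 : -1 ≤ Real.cos ι := Real.neg_one_le_cos ι
    have hss : 0 ≤ Real.sin ψ * Real.sin ψ' := mul_nonneg hsψ hsψ'
    have hle : Real.cos θ ≤ Real.cos a := by
      rw [hcosa, hι]; nlinarith
    have hge : Real.cos b ≤ Real.cos θ := by
      rw [hcosb, hι]; nlinarith
    exact ⟨(key θ a hθ0 hθπ ha0 haπ).1 hle, (key b θ hb0 hbπ hθ0 hθπ).1 hge⟩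
  · rintro ⟨h1, h2⟩
    have hle : Real.cos θ ≤ Real.cos a := (key θ a hθ0 hθπ ha0 haπ).2 h1
    have hge : Real.cos b ≤ Real.cos θ := (key b θ hb0 hbπ hθ0 hθπ).2 h2
    rw [hcosa] at hle
    rw [hcosb] at hge
    rcases eq_or_lt_of_le (mul_nonneg hsψ hsψ') with hz | hz
    · exact ⟨0, by rw [Real.cos_zero]; nlinarith⟩
    · set c := (Real.cos ψ * Real.cos ψ' - Real.cos θ) / (Real.sin ψ * Real.sin ψ') with hc
      have hc1 : c ≤ 1 := by
        rw [hc, div_le_one hz]; linarith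
      have hc2 : -1 ≤ c := by
        rw [hc, le_div_iff₀ hz]; linarith
      refine ⟨Real.arccos c, ?_⟩
      rw [Real.cos_arccos hc2 hc1, hc]
      have hψne : Real.sin ψ ≠ 0 := left_ne_zero_of_mul hz.ne'
      have hψ'ne : Real.sin ψ' ≠ 0 := right_ne_zero_of_mul hz.ne'
      field_simp
      ring
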